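/- arXiv:0904.3664 — 5 statements merged into one kernel-verified Lean document; each statement's English description precedes it below -/
import Mathlib

section
/- Let p⁰ ∈ ℝ^n be a probability vector with p⁰_i > 0 for all i, let α ∈ ℝ^n, μ ∈ ℝ and β ∈ ℝ. Define the Gibbs distribution q by q_i = p⁰_i e^{μ α_i} / Z where Z = Σ_j p⁰_j e^{μ α_j}, and suppose q satisfies the linear constraint Σ_i α_i q_i = β. Then for every probability vector p (p_i ≥ 0, Σ_i p_i = 1) satisfying Σ_i α_i p_i = β, one has D(q‖p⁰) ≤ D(p‖p⁰); that is, the Gibbs distribution minimizes the relative entropy to the prior p⁰ among all distributions satisfying the linear constraint. -/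
/-- The Gibbs distribution `q i = p0 i * exp (μ * a i) / Z` minimizes the relative entropy
`D(p‖p0)` among all probability vectors `p` satisfying the linear constraint
`∑ i, a i * p i = β`. -/
theorem stmt3 (n : ℕ) (p0 a : Fin n → ℝ) (μ β : ℝ)
    (hp0 : ∀ i, 0 < p0 i) (hp0sum : ∑ i, p0 i = 1)
    (q : Fin n → ℝ)
    (hq : q = fun i => p0 i * Real.exp (μ * a i) / ∑ j, p0 j * Real.exp (μ * a j))
    (hqβ : ∑ i, a i * q i = β) :
    ∀ p : Fin n → ℝ, (∀ i, 0 ≤ p i) → (∑ i, p i) = 1 → (∑ i, a i * p i) = β →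
      ∑ i, q i * Real.log (q i / p0 i) ≤ ∑ i, p i * Real.log (p i / p0 i) := by
  intro p hp hpsum hpβ
  rcases Nat.eq_zero_or_pos n with hn | hn
  · subst hn; simp at hp0sum
  set Z : ℝ := ∑ j, p0 j * Real.exp (μ * a j) with hZ
  have hZpos : 0 < Z := by
    apply Finset.sum_pos
    · intro i _; exact mul_pos (hp0 i) (Real.exp_pos _)
    · exact Finset.univ_nonempty_iff.2 (Fin.pos_iff_nonempty.1 hn)
  have hqpos : ∀ i, 0 < q i := by
    intro i; rw [hq]; exact div_pos (mul_pos (hp0 i) (Real.exp_pos _)) hZpos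
  have hqsum : ∑ i, q i = 1 := by
    rw [hq]; simp only
    rw [← Finset.sum_div, ← hZ, div_self hZpos.ne']
  have hlogq : ∀ i, Real.log (q i / p0 i) = μ * a i - Real.log Z := by
    intro i
    have h : q i / p0 i = Real.exp (μ * a i) / Z := by
      rw [hq]; field_simp [hZpos.ne', (hp0 i).ne']
    rw [h, Real.log_div (Real.exp_pos _).ne' hZpos.ne', Real.log_exp]
  -- LHS = μ β - log Z
  have hLHS : ∑ i, q i * Real.log (q i / p0 i) = μ * β - Real.log Z := by
    calc ∑ i, q i * Real.log (q i / p0 i)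
        = ∑ i, (μ * (a i * q i) - Real.log Z * q i) := by
          apply Finset.sum_congr rfl; intro i _; rw [hlogq i]; ring
      _ = μ * β - Real.log Z := by
          rw [Finset.sum_sub_distrib, ← Finset.mul_sum, ← Finset.mul_sum, hqβ, hqsum, mul_one]
  rw [hLHS]
  -- termwise: p i * log (p i / p0 i) ≥ p i * (μ * a i - log Z) + p i - q i
  have key : ∀ i : Fin n, p i * (μ * a i - Real.log Z) + (p i - q i)
      ≤ p i * Real.log (p i / p0 i) := by
    intro i
    rcases eq_or_lt_of_le (hp i) with h0 | hpi
    · rw [← h0]; simp [le_of_lt (hqpos i)]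
    · have h1 : Real.log (q i / p i) ≤ q i / p i - 1 :=
        Real.log_le_sub_one_of_pos (div_pos (hqpos i) hpi)
      have h2 : p i * Real.log (q i / p i) ≤ q i - p i := by
        have := mul_le_mul_of_nonneg_left h1 (le_of_lt hpi)
        calc p i * Real.log (q i / p i) ≤ p i * (q i / p i - 1) := this
          _ = q i - p i := by field_simp
      have h3 : Real.log (p i / p0 i) = Real.log (p i / q i) + Real.log (q i / p0 i) := by
        rw [← Real.log_mul (div_pos hpi (hqpos i)).ne' (div_pos (hqpos i) (hp0 i)).ne']
        have : p i / q i * (q i / p0 i) = p i / p0 i := by field_simp [(hqpos i).ne', (hp0 i).ne', hpi.ne']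
        rw [this]
      rw [h3, hlogq i, mul_add]
      have h4 : p i - q i ≤ p i * Real.log (p i / q i) := by
        have : Real.log (p i / q i) = - Real.log (q i / p i) := by
          rw [← Real.log_inv]; congr 1; field_simp
        rw [this]; nlinarith [h2]
      linarith
  calc μ * β - Real.log Z
      = ∑ i, (p i * (μ * a i - Real.log Z) + (p i - q i)) := by
        rw [Finset.sum_add_distrib, Finset.sum_sub_distrib, hpsum, hqsum, sub_self, add_zero]
        have : ∑ i, p i * (μ * a i - Real.log Z)
            = μ * (∑ i, a i * p i) - Real.log Z * (∑ i, p i) := by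
          rw [Finset.mul_sum, Finset.mul_sum, ← Finset.sum_sub_distrib]
          exact Finset.sum_congr rfl fun i _ => by ring
        rw [this, hpβ, hpsum, mul_one]
    _ ≤ ∑ i, p i * Real.log (p i / p0 i) := Finset.sum_le_sum fun i _ => key i
end

section
/- Let G be a real m×k matrix. Then G satisfies the three conditions (i) G ≥ 0 entrywise, (ii) Gᵀ G = I_k, and (iii) G Gᵀ 𝟙 = 𝟙 (where 𝟙 ∈ ℝ^m is the all-ones vector), if and only if there exists a surjective map ψ : {1,...,m} → {1,...,k} such that G_{ij} = 1/√(l_j) when ψ(i) = j and G_{ij} = 0 otherwise, where l_j = |{i : ψ(i) = j}|. -/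
open Matrix

/-- Characterization of the K-means feasibility set: an `m × k` matrix `G` is entrywise
nonnegative with `Gᵀ G = I` and `G Gᵀ 𝟙 = 𝟙` iff it is the column-scaled indicator matrix
of a surjective class assignment `ψ`, with `G i j = 1/√(l_j)` when `ψ i = j` (where `l_j`
is the size of class `j`) and `0` otherwise. -/
theorem stmt10 (m k : ℕ) (G : Matrix (Fin m) (Fin k) ℝ) :
    ((∀ i j, 0 ≤ G i j) ∧ Gᵀ * G = 1 ∧ (G * Gᵀ) *ᵥ (fun _ => (1 : ℝ)) = fun _ => 1) ↔
    ∃ ψ : Fin m → Fin k, Function.Surjective ψ ∧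
      ∀ i j, G i j =
        if ψ i = j then (Real.sqrt ((Finset.univ.filter fun i' => ψ i' = j).card))⁻¹
        else 0 := by
  constructor
  · rintro ⟨hnn, horth, hones⟩
    have hcol : ∀ j : Fin k, ∑ i, G i j * G i j = 1 := by
      intro j
      have h := congrFun (congrFun horth j) j
      simpa [Matrix.mul_apply, Matrix.one_apply, Matrix.transpose_apply] using h
    have hcross : ∀ (i : Fin m) (j j' : Fin k), j ≠ j' → G i j * G i j' = 0 := by
      intro i j j' hjj
      have h := congrFun (congrFun horth j) j'
      have h0 : ∑ p, G p j * G p j' = 0 := by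
        simpa [Matrix.mul_apply, Matrix.one_apply, Matrix.transpose_apply, hjj] using h
      exact (Finset.sum_eq_zero_iff_of_nonneg
        (fun p _ => mul_nonneg (hnn p j) (hnn p j'))).mp h0 i (Finset.mem_univ i)
    have hrow : ∀ i, ∑ j, G i j * (∑ p, G p j) = 1 := by
      intro i
      have h := congrFun hones i
      simp only [Matrix.mulVec, dotProduct, Matrix.mul_apply, Matrix.transpose_apply,
        mul_one] at h
      rw [Finset.sum_comm] at h
      simpa [Finset.mul_sum] using h
    have hex : ∀ i, ∃ j, G i j ≠ 0 := by
      intro i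
      by_contra hc
      push_neg at hc
      have := hrow i
      simp [hc] at this
    choose ψ hψ using hex
    have hzero : ∀ i j, ψ i ≠ j → G i j = 0 := by
      intro i j hne
      rcases mul_eq_zero.mp (hcross i (ψ i) j hne) with h | h
      · exact absurd h (hψ i)
      · exact h
    set s : Fin k → ℝ := fun j => ∑ p, G p j with hs
    have hGs : ∀ i, G i (ψ i) * s (ψ i) = 1 := by
      intro i
      have h := hrow i
      rw [Finset.sum_eq_single (ψ i)] at h
      · exact h
      · intro j _ hne
        rw [hzero i j (Ne.symm hne), zero_mul]
      · intro h'; exact absurd (Finset.mem_univ _) h'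
    have hsne : ∀ i, s (ψ i) ≠ 0 := by
      intro i h
      have := hGs i
      rw [h, mul_zero] at this
      exact zero_ne_one this
    have hGval : ∀ i, G i (ψ i) = (s (ψ i))⁻¹ :=
      fun i => eq_inv_of_mul_eq_one_left (hGs i)
    have hsurj : Function.Surjective ψ := by
      intro j
      by_contra hc
      push_neg at hc
      have hz : ∀ i, G i j = 0 := fun i => hzero i j (hc i)
      have := hcol j
      simp [hz] at this
    have hsne' : ∀ j, s j ≠ 0 := by
      intro j
      obtain ⟨i, rfl⟩ := hsurj j
      exact hsne i
    have hsqrt : ∀ j, s j = Real.sqrt ((Finset.univ.filter fun i' => ψ i' = j).card) := by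
      intro j
      have hc := hcol j
      have heq : ∑ i, G i j * G i j
          = ∑ i, if ψ i = j then (s j)⁻¹ * (s j)⁻¹ else 0 := by
        apply Finset.sum_congr rfl
        intro i _
        by_cases h' : ψ i = j
        · rw [if_pos h', ← h', hGval]
        · rw [if_neg h', hzero i j h', mul_zero]
      rw [heq, ← Finset.sum_filter, Finset.sum_const, nsmul_eq_mul] at hc
      have hpos : 0 < s j := by
        rcases lt_or_eq_of_le (Finset.sum_nonneg fun p _ => hnn p j) with h | h
        · exact h
        · exact absurd h.symm (hsne' j)
      have hcard : ((Finset.univ.filter fun i' => ψ i' = j).card : ℝ) = s j * s j := by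
        field_simp at hc
        linarith [hc]
      rw [hcard]
      rw [show s j * s j = s j ^ 2 by ring, Real.sqrt_sq hpos.le]
    refine ⟨ψ, hsurj, fun i j => ?_⟩
    by_cases h : ψ i = j
    · rw [if_pos h, ← hsqrt, ← h, hGval]
    · rw [if_neg h, hzero i j h]
  · rintro ⟨ψ, hsurj, hG⟩
    set l : Fin k → ℕ := fun j => (Finset.univ.filter fun i' => ψ i' = j).card with hl
    have hlpos : ∀ j, 0 < l j := by
      intro j
      obtain ⟨i, hi⟩ := hsurj j
      exact Finset.card_pos.mpr ⟨i, by simp [hi]⟩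
    have hsqpos : ∀ j, 0 < Real.sqrt (l j) := fun j =>
      Real.sqrt_pos.mpr (by exact_mod_cast hlpos j)
    have hsum : ∀ j, ∑ p, G p j = Real.sqrt (l j) := by
      intro j
      have : ∑ p, G p j = ∑ p, if ψ p = j then (Real.sqrt (l j))⁻¹ else 0 :=
        Finset.sum_congr rfl fun p _ => hG p j
      rw [this, ← Finset.sum_filter, Finset.sum_const, nsmul_eq_mul]
      have hcast : ((l j : ℝ)) = Real.sqrt (l j) * Real.sqrt (l j) :=
        (Real.mul_self_sqrt (Nat.cast_nonneg _)).symm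
      nth_rewrite 1 [hcast]
      rw [mul_assoc, mul_inv_cancel₀ (ne_of_gt (hsqpos j)), mul_one]
    refine ⟨fun i j => ?_, ?_, ?_⟩
    · rw [hG]
      split
      · positivity
      · exact le_refl 0
    · ext j j'
      simp only [Matrix.mul_apply, Matrix.transpose_apply]
      by_cases h : j = j'
      · subst h
        rw [Matrix.one_apply_eq]
        have heq : ∀ i, G i j * G i j = if ψ i = j then ((l j : ℝ))⁻¹ else 0 := by
          intro i
          rw [hG]
          by_cases h' : ψ i = j
          · rw [if_pos h', if_pos h', ← mul_inv, Real.mul_self_sqrt (Nat.cast_nonneg _)]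
          · rw [if_neg h', if_neg h', mul_zero]
        rw [Finset.sum_congr rfl fun i _ => heq i, ← Finset.sum_filter,
          Finset.sum_const, nsmul_eq_mul]
        exact mul_inv_cancel₀ (by exact_mod_cast (hlpos j).ne')
      · rw [Matrix.one_apply_ne h]
        apply Finset.sum_eq_zero
        intro i _
        rw [hG, hG]
        by_cases h' : ψ i = j
        · have hne : ψ i ≠ j' := fun hc => h (h'.symm.trans hc)
          rw [if_neg hne, mul_zero]
        · rw [if_neg h', zero_mul]
    · funext i
      simp only [Matrix.mulVec, dotProduct, Matrix.mul_apply, Matrix.transpose_apply, mul_one]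
      rw [Finset.sum_comm]
      calc ∑ j, ∑ p, G i j * G p j = ∑ j, G i j * ∑ p, G p j := by
            simp [Finset.mul_sum]
        _ = ∑ j, if ψ i = j then (Real.sqrt (l j))⁻¹ * Real.sqrt (l j) else 0 := by
            apply Finset.sum_congr rfl
            intro j _
            rw [hG, hsum]
            split
            · rfl
            · rw [zero_mul]
        _ = (Real.sqrt (l (ψ i)))⁻¹ * Real.sqrt (l (ψ i)) := by
            rw [Finset.sum_ite_eq]
            simp
        _ = 1 := inv_mul_cancel₀ (ne_of_gt (hsqpos _))
end

section
/- Let G be a real m×k matrix. Then G satisfies the three conditions (i) G ≥ 0 entrywise, (ii) G 𝟙 = 𝟙 (each row sums to 1, where 𝟙 denotes an all-ones vector), and (iii) Gᵀ G is a diagonal matrix, if and only if there exists a map ψ : {1,...,m} → {1,...,k} such that G_{ij} = 1 when ψ(i) = j and G_{ij} = 0 otherwise; that is, G is a 0/1 class-indicator matrix with exactly one 1 in each row. -/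
open Matrix

/-- Characterization of the Min-Cut feasibility set: an `m × k` matrix `G` is entrywise
nonnegative with `G 𝟙 = 𝟙` and `Gᵀ G` diagonal iff it is a 0/1 class-indicator matrix
with exactly one `1` in each row. -/
theorem stmt11 (m k : ℕ) (G : Matrix (Fin m) (Fin k) ℝ) :
    ((∀ i j, 0 ≤ G i j) ∧ (G *ᵥ (fun _ => (1 : ℝ)) = fun _ => 1) ∧ (Gᵀ * G).IsDiag) ↔
    ∃ ψ : Fin m → Fin k, ∀ i j, G i j = if ψ i = j then 1 else 0 := by
  constructor
  · rintro ⟨hpos, hrow, hdiag⟩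
    have hsum : ∀ i, ∑ j, G i j = 1 := by
      intro i
      have := congrFun hrow i
      simpa [mulVec, dotProduct] using this
    have hzero : ∀ (j j' : Fin k), j ≠ j' → ∀ i, G i j * G i j' = 0 := by
      intro j j' hjj' i
      have h0 : (Gᵀ * G) j j' = 0 := hdiag hjj'
      have hsum0 : ∑ i, G i j * G i j' = 0 := by
        simpa [Matrix.mul_apply, transpose_apply] using h0
      have := (Finset.sum_eq_zero_iff_of_nonneg (fun i _ =>
        mul_nonneg (hpos i j) (hpos i j'))).mp hsum0
      exact this i (Finset.mem_univ i)
    have hex : ∀ i, ∃ j, G i j ≠ 0 := by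
      intro i
      by_contra h
      push_neg at h
      have : ∑ j, G i j = 0 := Finset.sum_eq_zero (fun j _ => h j)
      rw [hsum i] at this
      norm_num at this
    choose ψ hψ using hex
    refine ⟨ψ, fun i j => ?_⟩
    have hother : ∀ j', j' ≠ ψ i → G i j' = 0 := by
      intro j' hj'
      have := hzero (ψ i) j' (Ne.symm hj') i
      rcases mul_eq_zero.mp this with h | h
      · exact absurd h (hψ i)
      · exact h
    have hone : G i (ψ i) = 1 := by
      have := hsum i
      rwa [Finset.sum_eq_single (ψ i) (fun b _ hb => hother b hb)
        (fun h => absurd (Finset.mem_univ _) h)] at this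
    by_cases h : ψ i = j
    · subst h; simp [hone]
    · simp [h, hother j (Ne.symm h)]
  · rintro ⟨ψ, hψ⟩
    refine ⟨fun i j => by rw [hψ]; positivity, ?_, ?_⟩
    · funext i
      simp [mulVec, dotProduct, hψ]
    · intro j j' hjj'
      simp only [Matrix.mul_apply, transpose_apply]
      apply Finset.sum_eq_zero
      intro i _
      rw [hψ, hψ]
      rcases eq_or_ne (ψ i) j with h | h
      · have : ψ i ≠ j' := by rw [h]; exact hjj'
        simp [this]
      · simp [h]
end

section
/- Let K be a symmetric positive-semidefinite n×n real matrix whose entries lie in [0,1], and let D = diag(K𝟙) be the diagonal matrix of row sums of K. Then the matrix K' = K − D + I is the closest matrix to K, in the entrywise L1 norm ‖B‖₁ = Σ_{i,j} |B_{ij}|, among all symmetric matrices F with F𝟙 = 𝟙: for every F with F = Fᵀ and F𝟙 = 𝟙 one has ‖K − F‖₁ ≥ ‖D − I‖₁, and ‖K − (K − D + I)‖₁ = ‖D − I‖₁. -/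
open Matrix

/-- Ratio-Cuts normalization: with `D = diag(K𝟙)`, the matrix `K' = K − D + I` is the
closest matrix to `K` in entrywise L1 norm among all symmetric matrices `F` with
`F𝟙 = 𝟙`: every such `F` satisfies `‖K − F‖₁ ≥ ‖D − I‖₁`, and `‖K − K'‖₁ = ‖D − I‖₁`. -/
theorem stmt12 (n : ℕ) (K : Matrix (Fin n) (Fin n) ℝ) (hpsd : K.PosSemidef)
    (hrange : ∀ i j, K i j ∈ Set.Icc (0 : ℝ) 1) :
    (∀ F : Matrix (Fin n) (Fin n) ℝ, Fᵀ = F → (F *ᵥ (fun _ => (1 : ℝ)) = fun _ => 1) →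
      ∑ i, ∑ j, |(Matrix.diagonal (K *ᵥ fun _ => (1 : ℝ)) - 1) i j| ≤
        ∑ i, ∑ j, |(K - F) i j|) ∧
    ∑ i, ∑ j, |(K - (K - Matrix.diagonal (K *ᵥ fun _ => (1 : ℝ)) + 1)) i j| =
      ∑ i, ∑ j, |(Matrix.diagonal (K *ᵥ fun _ => (1 : ℝ)) - 1) i j| := by
  constructor
  · intro F _hFt hF1
    refine Finset.sum_le_sum fun i _ => ?_
    have h1 : ∑ j, |(Matrix.diagonal (K *ᵥ fun _ => (1:ℝ)) - 1) i j|
        = |(K *ᵥ fun _ => (1:ℝ)) i - 1| := by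
      rw [Finset.sum_eq_single i]
      · simp [Matrix.diagonal, Matrix.one_apply]
      · intro j _ hj
        simp [Matrix.diagonal, Matrix.one_apply, (Ne.symm hj)]
      · simp
    have hFrow : ∑ j, F i j = 1 := by
      have := congrFun hF1 i
      simpa [Matrix.mulVec, dotProduct] using this
    have h2 : (K *ᵥ fun _ => (1:ℝ)) i - 1 = ∑ j, (K - F) i j := by
      simp [Matrix.mulVec, dotProduct, Finset.sum_sub_distrib, hFrow]
    rw [h1, h2]
    exact Finset.abs_sum_le_sum_abs _ _
  · refine Finset.sum_congr rfl fun i _ => Finset.sum_congr rfl fun j _ => ?_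
    congr 1
    simp [Matrix.sub_apply, Matrix.add_apply]
    ring
end

section
/- Let X be a measurable space, D a probability measure on X, C a finite nonempty set of measurable functions from X to {0,1}, and c : X → {0,1} a measurable target function. For h ∈ C define err(h) = D({x : h(x) ≠ c(x)}). Let ε, δ ∈ (0,1) and let m be a positive integer with m ≥ (1/ε) · ln(|C|/δ). Then under the product measure D^m on X^m, the probability of the event { (x₁,...,x_m) : ∃ h ∈ C such that h(x_i) = c(x_i) for all i = 1,...,m and err(h) > ε } is at most δ. In particular, any algorithm that outputs a hypothesis in C consistent with the training sample is a PAC learning algorithm for C with sample complexity m₀ = (1/ε) ln(|C|/δ). -/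
open MeasureTheory

/-- Realizable-case PAC learnability of a finite concept class: if
`m ≥ (1/ε) ln(|C|/δ)`, then the probability (under `m` i.i.d. draws from `D`) that some
hypothesis `h ∈ C` is consistent with the target `c` on the sample yet has true error
greater than `ε` is at most `δ`. -/
theorem stmt13 {X : Type*} [MeasurableSpace X] (D : Measure X) [IsProbabilityMeasure D]
    (C : Finset (X → Bool)) (hCne : C.Nonempty) (hCmeas : ∀ h ∈ C, Measurable h)
    (c : X → Bool) (hc : Measurable c)
    (ε δ : ℝ) (hε : ε ∈ Set.Ioo (0 : ℝ) 1) (hδ : δ ∈ Set.Ioo (0 : ℝ) 1)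
    (m : ℕ) (hm : 0 < m) (hsample : (1 / ε) * Real.log (C.card / δ) ≤ m) :
    Measure.pi (fun _ : Fin m => D)
      {xs : Fin m → X | ∃ h ∈ C, (∀ i, h (xs i) = c (xs i)) ∧
        ENNReal.ofReal ε < D {x | h x ≠ c x}}
    ≤ ENNReal.ofReal δ := by
  classical
  obtain ⟨hε0, hε1⟩ := hε
  obtain ⟨hδ0, hδ1⟩ := hδ
  have hCcard : (0:ℝ) < C.card := by
    exact_mod_cast Finset.card_pos.mpr hCne
  -- real-valued key inequality: (1-ε)^m ≤ δ / |C|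
  have hkey : (1 - ε) ^ m ≤ δ / C.card := by
    have h1 : (1 - ε) ^ m ≤ Real.exp (-ε) ^ m := by
      apply pow_le_pow_left₀ (by linarith)
      linarith [Real.add_one_le_exp (-ε)]
    have h2 : Real.exp (-ε) ^ m = Real.exp (-(ε * m)) := by
      rw [← Real.exp_nat_mul]; ring_nf
    have h3 : Real.log (C.card / δ) ≤ ε * m := by
      have := mul_le_mul_of_nonneg_left hsample hε0.le
      rw [← mul_assoc, mul_one_div, div_self hε0.ne', one_mul] at this
      linarith
    have h4 : Real.exp (-(ε * m)) ≤ δ / C.card := by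
      rw [← Real.exp_log (show (0:ℝ) < δ / C.card by positivity)]
      apply Real.exp_le_exp.mpr
      have : Real.log (δ / C.card) = - Real.log (C.card / δ) := by
        rw [← Real.log_inv, inv_div]
      rw [this]
      linarith
    calc (1 - ε) ^ m ≤ Real.exp (-ε) ^ m := h1
      _ = Real.exp (-(ε * m)) := h2
      _ ≤ δ / C.card := h4
  set S : (X → Bool) → Set (Fin m → X) := fun h =>
    {xs : Fin m → X | (∀ i, h (xs i) = c (xs i)) ∧ ENNReal.ofReal ε < D {x | h x ≠ c x}}
  have hsub : {xs : Fin m → X | ∃ h ∈ C, (∀ i, h (xs i) = c (xs i)) ∧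
      ENNReal.ofReal ε < D {x | h x ≠ c x}} ⊆ ⋃ h ∈ C, S h := by
    intro xs ⟨h, hh, h1, h2⟩
    exact Set.mem_biUnion hh ⟨h1, h2⟩
  refine le_trans (le_trans (measure_mono hsub) (measure_biUnion_finset_le C S)) ?_
  have hbound : ∀ h ∈ C, Measure.pi (fun _ : Fin m => D) (S h) ≤ ENNReal.ofReal (δ / C.card) := by
    intro h hh
    by_cases herr : ENNReal.ofReal ε < D {x | h x ≠ c x}
    · have hsub2 : S h ⊆ Set.pi Set.univ (fun _ : Fin m => {x | h x = c x}) := by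
        intro xs hxs i _
        exact hxs.1 i
      refine le_trans (measure_mono hsub2) ?_
      rw [Measure.pi_pi, Finset.prod_const, Finset.card_univ, Fintype.card_fin]
      have hA : D {x | h x = c x} ≤ ENNReal.ofReal (1 - ε) := by
        have hcompl : {x | h x = c x} = {x | h x ≠ c x}ᶜ := by
          ext x; simp [Set.mem_compl_iff]
        have hmeas : MeasurableSet {x | h x ≠ c x} := by
          have : MeasurableSet {x | h x = c x} :=
            measurableSet_eq_fun (hCmeas h hh) hc
          simpa [hcompl] using this.compl
        rw [hcompl, measure_compl hmeas (measure_ne_top D _)]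
        have h1 : ENNReal.ofReal ε ≤ D {x | h x ≠ c x} := herr.le
        have : ENNReal.ofReal (1 - ε) = 1 - ENNReal.ofReal ε := by
          rw [ENNReal.ofReal_sub _ hε0.le]; simp
        rw [this, measure_univ]
        exact tsub_le_tsub_left h1 1
      calc D {x | h x = c x} ^ m ≤ ENNReal.ofReal (1 - ε) ^ m := pow_le_pow_left' hA m
        _ = ENNReal.ofReal ((1 - ε) ^ m) := by
            rw [ENNReal.ofReal_pow (by linarith)]
        _ ≤ ENNReal.ofReal (δ / C.card) := ENNReal.ofReal_le_ofReal hkey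
    · have : S h = ∅ := by
        ext xs; simp only [S, Set.mem_setOf_eq, Set.mem_empty_iff_false, iff_false]
        rintro ⟨-, h2⟩; exact herr h2
      simp [this]
  calc ∑ h ∈ C, Measure.pi (fun _ : Fin m => D) (S h)
      ≤ ∑ h ∈ C, ENNReal.ofReal (δ / C.card) := Finset.sum_le_sum hbound
    _ = C.card * ENNReal.ofReal (δ / C.card) := by rw [Finset.sum_const, nsmul_eq_mul]
    _ = ENNReal.ofReal δ := by
        rw [← ENNReal.ofReal_natCast, ← ENNReal.ofReal_mul (by positivity)]
        congr 1
        field_simp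
end
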